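/- Let R be a ring and n ≥ 1 an integer. R is a CN ring if and only if V_n(R) is a CN ring, where V_n(R) is the subring of M_n(R) consisting of all upper triangular Toeplitz matrices, i.e. upper triangular matrices whose (i,j)-entry depends only on the difference j - i; the CN-decomposition in V_n(R) is taken with respect to the center of V_n(R) and nilpotent elements of V_n(R). -/

import Mathlib

/-- An element of a ring has a *CN-decomposition* if it is a sum of a central
element and a nilpotent element. -/
def HasCNDecomp {R : Type*} [Ring R] (a : R) : Prop :=
  ∃ c n : R, c ∈ Set.center R ∧ IsNilpotent n ∧ a = c + n

/-- A ring is a *CN ring* if every element has a CN-decomposition. -/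
def IsCNRing (R : Type*) [Ring R] : Prop := ∀ a : R, HasCNDecomp a

/-- `Vₙ(R)`: the subring of `Mₙ(R)` of upper triangular Toeplitz matrices,
i.e. upper triangular matrices whose `(i, j)` entry depends only on `j - i`. -/
def Vn (R : Type*) [Ring R] (n : ℕ) : Subring (Matrix (Fin n) (Fin n) R) where
  carrier := {A | (∀ i j : Fin n, (j : ℕ) < (i : ℕ) → A i j = 0) ∧
    ∀ i j k l : Fin n, (i : ℕ) + (l : ℕ) = (k : ℕ) + (j : ℕ) → A i j = A k l}
  zero_mem' := ⟨fun _ _ _ => rfl, fun _ _ _ _ _ => rfl⟩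
  one_mem' := by
    constructor
    · intro i j h
      exact Matrix.one_apply_ne (fun hij => by omega)
    · intro p q r s hsum
      by_cases hpq : p = q
      · have hrs : r = s := by subst hpq; exact Fin.ext (by omega)
        subst hpq; subst hrs
        rw [Matrix.one_apply_eq, Matrix.one_apply_eq]
      · have hpq' : (p : ℕ) ≠ (q : ℕ) := fun h => hpq (Fin.ext h)
        have hrs : r ≠ s := fun h => hpq' (by omega)
        rw [Matrix.one_apply_ne hpq, Matrix.one_apply_ne hrs]
  add_mem' := by
    rintro A B ⟨hA1, hA2⟩ ⟨hB1, hB2⟩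
    exact ⟨fun i j h => by simp [Matrix.add_apply, hA1 i j h, hB1 i j h],
      fun p q r s hsum => by simp [Matrix.add_apply, hA2 p q r s hsum, hB2 p q r s hsum]⟩
  neg_mem' := by
    rintro A ⟨hA1, hA2⟩
    exact ⟨fun i j h => by simp [Matrix.neg_apply, hA1 i j h],
      fun p q r s hsum => by simp [Matrix.neg_apply, hA2 p q r s hsum]⟩
  mul_mem' := by
    rintro A B ⟨hA1, hA2⟩ ⟨hB1, hB2⟩
    have hUT : ∀ i j : Fin n, (j : ℕ) < (i : ℕ) → (A * B) i j = 0 := by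
      intro i j h
      rw [Matrix.mul_apply]
      apply Finset.sum_eq_zero
      intro m _
      rcases lt_or_ge (m : ℕ) (i : ℕ) with hm | hm
      · rw [hA1 i m hm, zero_mul]
      · rw [hB1 m j (by omega), mul_zero]
    refine ⟨hUT, ?_⟩
    have expand : ∀ p q : Fin n, (A * B) p q = ∑ m ∈ Finset.Icc p q, A p m * B m q := by
      intro p q
      rw [Matrix.mul_apply]
      refine (Finset.sum_subset (Finset.subset_univ _) ?_).symm
      intro m _ hm
      rw [Finset.mem_Icc, not_and_or] at hm
      rcases hm with hm | hm
      · rw [hA1 p m (by rw [Fin.le_def] at hm; omega), zero_mul]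
      · rw [hB1 m q (by rw [Fin.le_def] at hm; omega), mul_zero]
    intro p q r s hsum
    rcases lt_or_ge (q : ℕ) (p : ℕ) with hpq | hpq
    · rw [hUT p q hpq, hUT r s (by omega)]
    · rw [expand p q, expand r s]
      have hs : (s : ℕ) < n := s.isLt
      refine Finset.sum_bij'
        (fun m hm => (⟨(m : ℕ) + (r : ℕ) - (p : ℕ), by
          have h1 := (Finset.mem_Icc.mp hm).1
          have h2 := (Finset.mem_Icc.mp hm).2
          rw [Fin.le_def] at h1 h2; omega⟩ : Fin n))
        (fun m hm => (⟨(m : ℕ) + (p : ℕ) - (r : ℕ), by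
          have h1 := (Finset.mem_Icc.mp hm).1
          have h2 := (Finset.mem_Icc.mp hm).2
          rw [Fin.le_def] at h1 h2
          have hq : (q : ℕ) < n := q.isLt; omega⟩ : Fin n))
        ?_ ?_ ?_ ?_ ?_
      · intro m hm
        have h1 := (Finset.mem_Icc.mp hm).1
        have h2 := (Finset.mem_Icc.mp hm).2
        rw [Fin.le_def] at h1 h2
        simp only [Finset.mem_Icc, Fin.le_def]
        constructor <;> (try simp) <;> omega
      · intro m hm
        have h1 := (Finset.mem_Icc.mp hm).1
        have h2 := (Finset.mem_Icc.mp hm).2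
        rw [Fin.le_def] at h1 h2
        simp only [Finset.mem_Icc, Fin.le_def]
        constructor <;> (try simp) <;> omega
      · intro m hm
        have h1 := (Finset.mem_Icc.mp hm).1
        rw [Fin.le_def] at h1
        exact Fin.ext (by simp; omega)
      · intro m hm
        have h1 := (Finset.mem_Icc.mp hm).1
        rw [Fin.le_def] at h1
        exact Fin.ext (by simp; omega)
      · intro m hm
        have h1 := (Finset.mem_Icc.mp hm).1
        have h2 := (Finset.mem_Icc.mp hm).2
        rw [Fin.le_def] at h1 h2
        have e1 : A p m = A r ⟨(m : ℕ) + (r : ℕ) - (p : ℕ), by omega⟩ :=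
          hA2 p m r _ (by simp; omega)
        have e2 : B m q = B ⟨(m : ℕ) + (r : ℕ) - (p : ℕ), by omega⟩ s :=
          hB2 m q _ s (by simp; omega)
        rw [e1, e2]

section Aux

variable {R : Type*} [Ring R] {n : ℕ}

lemma mem_Vn_iff {A : Matrix (Fin n) (Fin n) R} :
    A ∈ Vn R n ↔ (∀ i j : Fin n, (j : ℕ) < (i : ℕ) → A i j = 0) ∧
      (∀ i j k l : Fin n, (i : ℕ) + (l : ℕ) = (k : ℕ) + (j : ℕ) → A i j = A k l) :=
  Iff.rfl

/-- strictly upper triangular matrices multiply to raise the "gap". -/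
lemma strict_mul_aux {k : ℕ} (B C : Matrix (Fin n) (Fin n) R)
    (hB : ∀ i j : Fin n, (j : ℕ) < (i : ℕ) + k → B i j = 0)
    (hC : ∀ i j : Fin n, (j : ℕ) ≤ (i : ℕ) → C i j = 0) :
    ∀ i j : Fin n, (j : ℕ) < (i : ℕ) + (k + 1) → (B * C) i j = 0 := by
  intro i j hij
  rw [Matrix.mul_apply]
  apply Finset.sum_eq_zero
  intro m _
  rcases lt_or_ge (m : ℕ) ((i : ℕ) + k) with h | h
  · rw [hB i m h, zero_mul]
  · rw [hC m j (by omega), mul_zero]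

lemma strict_pow_eq_zero (x : Matrix (Fin n) (Fin n) R)
    (hx : ∀ i j : Fin n, (j : ℕ) ≤ (i : ℕ) → x i j = 0) (hn : 1 ≤ n) :
    x ^ n = 0 := by
  have key : ∀ k : ℕ, ∀ i j : Fin n, (j : ℕ) < (i : ℕ) + (k + 1) → (x ^ (k + 1)) i j = 0 := by
    intro k
    induction k with
    | zero => intro i j hij; rw [pow_one]; exact hx i j (by omega)
    | succ k ih =>
        intro i j hij
        rw [pow_succ]
        exact strict_mul_aux (x ^ (k + 1)) x ih hx i j hij
  ext i j
  obtain ⟨m, rfl⟩ : ∃ m, n = m + 1 := ⟨n - 1, by omega⟩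
  have := key m i j (by omega)
  simpa using this

lemma Vn_mul_entry (hn : 1 ≤ n) (A B : Vn R n) :
    ((A * B : Vn R n) : Matrix (Fin n) (Fin n) R) ⟨0, hn⟩ ⟨0, hn⟩ =
      (A : Matrix (Fin n) (Fin n) R) ⟨0, hn⟩ ⟨0, hn⟩ *
        (B : Matrix (Fin n) (Fin n) R) ⟨0, hn⟩ ⟨0, hn⟩ := by
  have : ((A * B : Vn R n) : Matrix (Fin n) (Fin n) R) =
      (A : Matrix (Fin n) (Fin n) R) * (B : Matrix (Fin n) (Fin n) R) := rfl
  rw [this, Matrix.mul_apply]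
  apply Finset.sum_eq_single (⟨0, hn⟩ : Fin n)
  · intro m _ hm
    have hm0 : (0 : ℕ) < (m : ℕ) := by
      rcases Nat.eq_zero_or_pos (m : ℕ) with h | h
      · exact absurd (Fin.ext h : m = ⟨0, hn⟩) hm
      · exact h
    rw [(mem_Vn_iff.mp B.2).1 m ⟨0, hn⟩ hm0, mul_zero]
  · intro h; exact absurd (Finset.mem_univ _) h

lemma Vn_pow_entry (hn : 1 ≤ n) (A : Vn R n) (t : ℕ) :
    ((A ^ t : Vn R n) : Matrix (Fin n) (Fin n) R) ⟨0, hn⟩ ⟨0, hn⟩ =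
      ((A : Matrix (Fin n) (Fin n) R) ⟨0, hn⟩ ⟨0, hn⟩) ^ t := by
  induction t with
  | zero =>
      simp only [pow_zero]
      have : ((1 : Vn R n) : Matrix (Fin n) (Fin n) R) = 1 := rfl
      rw [this, Matrix.one_apply_eq]
  | succ t ih =>
      rw [pow_succ, pow_succ, Vn_mul_entry hn, ih]

/-- Constant diagonal matrices are in `Vn`. -/
lemma scalar_mem_Vn (c : R) : Matrix.diagonal (fun _ : Fin n => c) ∈ Vn R n := by
  rw [mem_Vn_iff]
  constructor
  · intro i j h
    exact Matrix.diagonal_apply_ne _ (fun hij => by rw [hij] at h; omega)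
  · intro p q r s hsum
    by_cases hpq : p = q
    · have hrs : r = s := Fin.ext (by subst hpq; omega)
      subst hpq; subst hrs
      rw [Matrix.diagonal_apply_eq, Matrix.diagonal_apply_eq]
    · have hpq' : (p : ℕ) ≠ (q : ℕ) := fun h => hpq (Fin.ext h)
      have hrs : r ≠ s := fun h => hpq' (by subst h; omega)
      rw [Matrix.diagonal_apply_ne _ hpq, Matrix.diagonal_apply_ne _ hrs]

/-- An element of `Vn` whose diagonal entry is nilpotent is nilpotent. -/
lemma Vn_isNilpotent_of_entry (hn : 1 ≤ n) (A : Vn R n)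
    (h : IsNilpotent ((A : Matrix (Fin n) (Fin n) R) ⟨0, hn⟩ ⟨0, hn⟩)) :
    IsNilpotent A := by
  obtain ⟨t, ht⟩ := h
  refine ⟨t * n, ?_⟩
  have h1 : ((A ^ t : Vn R n) : Matrix (Fin n) (Fin n) R) ⟨0, hn⟩ ⟨0, hn⟩ = 0 := by
    rw [Vn_pow_entry hn, ht]
  set B : Vn R n := A ^ t with hB
  have hstrict : ∀ i j : Fin n, (j : ℕ) ≤ (i : ℕ) →
      (B : Matrix (Fin n) (Fin n) R) i j = 0 := by
    intro i j hij
    rcases lt_or_eq_of_le hij with h' | h'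
    · exact (mem_Vn_iff.mp B.2).1 i j h'
    · have hij' : i = j := Fin.ext h'.symm
      subst hij'
      calc (B : Matrix (Fin n) (Fin n) R) i i
          = (B : Matrix (Fin n) (Fin n) R) ⟨0, hn⟩ ⟨0, hn⟩ :=
            (mem_Vn_iff.mp B.2).2 i i ⟨0, hn⟩ ⟨0, hn⟩ (by simp)
        _ = 0 := h1
  have hBn : (B : Matrix (Fin n) (Fin n) R) ^ n = 0 :=
    strict_pow_eq_zero _ hstrict hn
  have : A ^ (t * n) = (A ^ t) ^ n := by rw [pow_mul]
  rw [this]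
  apply Subtype.ext
  rw [← hB]
  push_cast
  rw [hBn]

end Aux

/-- For `n ≥ 1`, `R` is a CN ring iff `Vₙ(R)` is a CN ring. -/
lemma scalar_comm_matrix {R : Type*} [Ring R] {n : ℕ} (c : R)
    (hc : ∀ b : R, b * c = c * b) (M : Matrix (Fin n) (Fin n) R) :
    M * Matrix.diagonal (fun _ => c) = Matrix.diagonal (fun _ => c) * M := by
  ext i j
  rw [Matrix.mul_diagonal, Matrix.diagonal_mul]
  exact hc _

theorem isCNRing_iff_Vn {R : Type*} [Ring R] (n : ℕ) (hn : 1 ≤ n) :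
    IsCNRing R ↔ IsCNRing (Vn R n) := by
  constructor
  · intro h A
    obtain ⟨c, ν, hc, hν, hca⟩ :=
      h ((A : Matrix (Fin n) (Fin n) R) ⟨0, hn⟩ ⟨0, hn⟩)
    have hc' : ∀ b : R, b * c = c * b := fun b => Semigroup.mem_center_iff.mp hc b
    refine ⟨⟨Matrix.diagonal (fun _ => c), scalar_mem_Vn c⟩,
      A - ⟨Matrix.diagonal (fun _ => c), scalar_mem_Vn c⟩, ?_, ?_, by abel⟩
    · rw [Semigroup.mem_center_iff]
      intro D
      apply Subtype.ext
      have h1 : ((D * ⟨Matrix.diagonal (fun _ => c), scalar_mem_Vn c⟩ : Vn R n) :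
          Matrix (Fin n) (Fin n) R)
          = (D : Matrix (Fin n) (Fin n) R) * Matrix.diagonal (fun _ => c) := rfl
      have h2 : ((((⟨Matrix.diagonal (fun _ => c), scalar_mem_Vn c⟩ : Vn R n) * D : Vn R n)) :
          Matrix (Fin n) (Fin n) R)
          = Matrix.diagonal (fun _ => c) * (D : Matrix (Fin n) (Fin n) R) := rfl
      rw [h1, h2, scalar_comm_matrix c hc']
    · apply Vn_isNilpotent_of_entry hn
      have h3 : ((A - ⟨Matrix.diagonal (fun _ => c), scalar_mem_Vn c⟩ : Vn R n) :
          Matrix (Fin n) (Fin n) R)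
          = (A : Matrix (Fin n) (Fin n) R) - Matrix.diagonal (fun _ => c) := rfl
      rw [h3, Matrix.sub_apply, Matrix.diagonal_apply_eq, hca, add_sub_cancel_left]
      exact hν
  · intro h a
    obtain ⟨C, N, hC, hN, hsum⟩ :=
      h ⟨Matrix.diagonal (fun _ => a), scalar_mem_Vn a⟩
    refine ⟨(C : Matrix (Fin n) (Fin n) R) ⟨0, hn⟩ ⟨0, hn⟩,
      (N : Matrix (Fin n) (Fin n) R) ⟨0, hn⟩ ⟨0, hn⟩, ?_, ?_, ?_⟩
    · rw [Semigroup.mem_center_iff]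
      intro b
      have hcomm := Semigroup.mem_center_iff.mp hC
        (⟨Matrix.diagonal (fun _ => b), scalar_mem_Vn b⟩ : Vn R n)
      have hm : Matrix.diagonal (fun _ => b) * (C : Matrix (Fin n) (Fin n) R)
          = (C : Matrix (Fin n) (Fin n) R) * Matrix.diagonal (fun _ => b) :=
        congrArg (fun X : Vn R n => (X : Matrix (Fin n) (Fin n) R)) hcomm
      have := congrFun (congrFun hm (⟨0, hn⟩ : Fin n)) (⟨0, hn⟩ : Fin n)
      rwa [Matrix.diagonal_mul, Matrix.mul_diagonal] at this
    · obtain ⟨t, ht⟩ := hN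
      refine ⟨t, ?_⟩
      have h4 := Vn_pow_entry hn N t
      rw [ht] at h4
      have h0 : (((0 : Vn R n)) : Matrix (Fin n) (Fin n) R) ⟨0, hn⟩ ⟨0, hn⟩ = 0 := rfl
      rw [h0] at h4
      exact h4.symm
    · have hm : (Matrix.diagonal (fun _ : Fin n => a))
          = (C : Matrix (Fin n) (Fin n) R) + (N : Matrix (Fin n) (Fin n) R) :=
        congrArg (fun X : Vn R n => (X : Matrix (Fin n) (Fin n) R)) hsum
      have := congrFun (congrFun hm (⟨0, hn⟩ : Fin n)) (⟨0, hn⟩ : Fin n)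
      rwa [Matrix.diagonal_apply_eq, Matrix.add_apply] at this
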